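/- With the notation of the (2,4,2) parabolic case, the eight polynomials M1, M2, N1, N2, L11, L12, L21, L22 are algebraically independent over K. -/
import Mathlib


/- Statement 0: the identity L12·L21 − L11·L22 = M1·N1·D in the coordinate ring of the
(2,4,2) nilradical of gl(8,K).  Variables are indexed 0-based: x_{ij} (1-based) is
`X (i-1, j-1)`.  The ambient polynomial ring contains all pairs, but only nilradical
variables occur in the polynomials and in the generic matrix `Xgen`. -/

noncomputable section

open MvPolynomial

variable (K : Type*) [Field K] [CharZero K]

/-- nilradical positions of the (2,4,2) parabolic (0-based). -/
def NilPos242 (i j : Fin 8) : Prop :=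
  (i.val < 2 ∧ 2 ≤ j.val) ∨ (2 ≤ i.val ∧ i.val < 6 ∧ 6 ≤ j.val)

instance (i j : Fin 8) : Decidable (NilPos242 i j) := by
  unfold NilPos242; infer_instance

abbrev A8 := MvPolynomial (Fin 8 × Fin 8) K

def pM1 : A8 K := X (1,2)
def pM2 : A8 K := X (0,2) * X (1,3) - X (0,3) * X (1,2)
def pN1 : A8 K := X (5,6)
def pN2 : A8 K := X (4,6) * X (5,7) - X (4,7) * X (5,6)
def pL11 : A8 K :=
  X (1,2) * X (2,6) + X (1,3) * X (3,6) + X (1,4) * X (4,6) + X (1,5) * X (5,6)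
def pL12 : A8 K :=
  (X (0,2) * X (1,3) - X (0,3) * X (1,2)) * X (3,6) +
  (X (0,2) * X (1,4) - X (0,4) * X (1,2)) * X (4,6) +
  (X (0,2) * X (1,5) - X (0,5) * X (1,2)) * X (5,6)
def pL21 : A8 K :=
  X (1,2) * (X (2,6) * X (5,7) - X (2,7) * X (5,6)) +
  X (1,3) * (X (3,6) * X (5,7) - X (3,7) * X (5,6)) +
  X (1,4) * (X (4,6) * X (5,7) - X (4,7) * X (5,6))
def pL22 : A8 K :=
  (X (0,2) * X (1,3) - X (0,3) * X (1,2)) * (X (3,6) * X (5,7) - X (3,7) * X (5,6)) +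
  (X (0,2) * X (1,4) - X (0,4) * X (1,2)) * (X (4,6) * X (5,7) - X (4,7) * X (5,6))

/-- the generic nilradical matrix: `x_{ij}` at nilradical positions, `0` elsewhere. -/
def Xgen : Matrix (Fin 8) (Fin 8) (A8 K) :=
  fun i j => if NilPos242 i j then X (i, j) else 0

/-! ### Auxiliary specialization machinery

We specialize the 24 nilradical variables inside the fraction field of a polynomial
ring in 8 variables `t0, …, t7`, in such a way that the eight polynomials map exactly
to `t0, …, t7`.  Algebraic independence then follows by pulling back along this
algebra homomorphism. -/

abbrev R8aux := MvPolynomial (Fin 8) K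
abbrev F8aux := FractionRing (R8aux K)

/-- the images of the 8 target variables in the fraction field. -/
def uaux (k : Fin 8) : F8aux K := algebraMap (R8aux K) (F8aux K) (X k)

/-- the specialization of the matrix variables. -/
def vaux : Fin 8 × Fin 8 → F8aux K := fun p =>
  if p = (1,2) then uaux K 0
  else if p = (0,2) then uaux K 1
  else if p = (1,3) then 1
  else if p = (5,6) then uaux K 2
  else if p = (4,6) then uaux K 3
  else if p = (5,7) then 1
  else if p = (3,6) then uaux K 4
  else if p = (0,4) then (uaux K 1 * uaux K 4 - uaux K 5) / (uaux K 0 * uaux K 3)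
  else if p = (3,7) then (uaux K 5 - uaux K 7) / (uaux K 1 * uaux K 2)
  else if p = (2,7) then
    (uaux K 1 * uaux K 4 - (uaux K 5 - uaux K 7) - uaux K 1 * uaux K 6) /
      (uaux K 1 * uaux K 0 * uaux K 2)
  else 0

/-- the specialization homomorphism. -/
def phiaux : A8 K →ₐ[K] F8aux K := aeval (vaux K)

lemma uaux_ne_zero (k : Fin 8) : uaux K k ≠ 0 := by
  intro h
  rw [uaux, show (0 : F8aux K) = algebraMap (R8aux K) (F8aux K) 0 by simp] at h
  exact MvPolynomial.X_ne_zero k (IsFractionRing.injective (R8aux K) (F8aux K) h)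

lemma uaux_algIndep : AlgebraicIndependent K (uaux K) := by
  have hinj : Function.Injective (IsScalarTower.toAlgHom K (R8aux K) (F8aux K)) :=
    IsFractionRing.injective (R8aux K) (F8aux K)
  have h := (MvPolynomial.algebraicIndependent_X (Fin 8) K).map' hinj
  have he : (IsScalarTower.toAlgHom K (R8aux K) (F8aux K)) ∘ X = uaux K := by
    funext k; simp [uaux]
  rwa [he] at h

/-- the eight polynomials M1, M2, N1, N2, L11, L12, L21, L22 are
algebraically independent over K. -/
theorem generators_algebraically_independent :
    AlgebraicIndependent K
      ![pM1 K, pM2 K, pN1 K, pN2 K, pL11 K, pL12 K, pL21 K, pL22 K] := by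
  have h0 := uaux_ne_zero K 0
  have h1 := uaux_ne_zero K 1
  have h2 := uaux_ne_zero K 2
  have h3 := uaux_ne_zero K 3
  apply AlgebraicIndependent.of_comp (phiaux K)
  have hcomp : (phiaux K) ∘ ![pM1 K, pM2 K, pN1 K, pN2 K, pL11 K, pL12 K, pL21 K, pL22 K]
      = uaux K := by
    funext i
    fin_cases i
    · show phiaux K (pM1 K) = uaux K 0
      simp [phiaux, pM1, vaux]
    · show phiaux K (pM2 K) = uaux K 1
      simp [phiaux, pM2, vaux]
    · show phiaux K (pN1 K) = uaux K 2
      simp [phiaux, pN1, vaux]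
    · show phiaux K (pN2 K) = uaux K 3
      simp [phiaux, pN2, vaux]
    · show phiaux K (pL11 K) = uaux K 4
      simp [phiaux, pL11, vaux]
    · show phiaux K (pL12 K) = uaux K 5
      simp only [phiaux, pL12, map_add, map_sub, map_mul, aeval_X, vaux, Prod.mk.injEq,
        Fin.reduceEq, and_false, false_and, and_true, true_and, and_self, if_true, if_false,
        ite_true, ite_false, mul_one, one_mul, mul_zero, zero_mul, sub_zero, zero_sub,
        add_zero, zero_add]
      field_simp
      ring
    · show phiaux K (pL21 K) = uaux K 6
      simp only [phiaux, pL21, map_add, map_sub, map_mul, aeval_X, vaux, Prod.mk.injEq,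
        Fin.reduceEq, and_false, false_and, and_true, true_and, and_self, if_true, if_false,
        ite_true, ite_false, mul_one, one_mul, mul_zero, zero_mul, sub_zero, zero_sub,
        add_zero, zero_add]
      field_simp
      ring
    · show phiaux K (pL22 K) = uaux K 7
      simp only [phiaux, pL22, map_add, map_sub, map_mul, aeval_X, vaux, Prod.mk.injEq,
        Fin.reduceEq, and_false, false_and, and_true, true_and, and_self, if_true, if_false,
        ite_true, ite_false, mul_one, one_mul, mul_zero, zero_mul, sub_zero, zero_sub,
        add_zero, zero_add]
      field_simp
      ring
  rw [hcomp]
  exact uaux_algIndep K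

end
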